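/- Let A ∈ ℝ^{n×n}, B ∈ ℝ^{n×p}, and K ∈ ℝ^{p×n}. Then A + BK is Schur stable (every eigenvalue has modulus strictly less than 1) if and only if there exist a symmetric positive definite M ∈ ℝ^{n×n} and L ∈ ℝ^{p×n} such that the 2×2 block matrix [[M, MAᵀ + LᵀBᵀ], [AM + BL, M]] is positive definite and K = LM⁻¹. -/

import Mathlib

open Matrix Polynomial Filter
open scoped ComplexOrder NNReal ENNReal

section Helpers

lemma eval_charpoly' {R : Type*} [CommRing R] {m : Type*} [Fintype m] [DecidableEq m]
    (N : Matrix m m R) (z : R) :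
    N.charpoly.eval z = (z • (1 : Matrix m m R) - N).det := by
  rw [Matrix.charpoly, eval_det, matPolyEquiv_charmatrix]
  simp [smul_one_eq_diagonal]

lemma exists_eigenvec {m : Type*} [Fintype m] [DecidableEq m]
    (N : Matrix m m ℂ) {z : ℂ} (h : N.charpoly.IsRoot z) :
    ∃ v : m → ℂ, v ≠ 0 ∧ N *ᵥ v = z • v := by
  have hd : (z • (1 : Matrix m m ℂ) - N).det = 0 := by
    rw [← eval_charpoly']; exact h
  obtain ⟨v, hv0, hv⟩ := (Matrix.exists_mulVec_eq_zero_iff).2 hd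
  refine ⟨v, hv0, ?_⟩
  have h2 := hv
  rw [sub_mulVec, sub_eq_zero, smul_mulVec, one_mulVec] at h2
  exact h2.symm

lemma mem_spectrum_charpoly {m : Type*} [Fintype m] [DecidableEq m]
    (N : Matrix m m ℂ) {z : ℂ} (h : z ∈ spectrum ℂ N) : N.charpoly.IsRoot z := by
  rw [spectrum.mem_iff, Algebra.algebraMap_eq_smul_one] at h
  rw [Polynomial.IsRoot, eval_charpoly']
  by_contra hd
  exact h ((Matrix.isUnit_iff_isUnit_det _).2 (Ne.isUnit hd))

lemma charpoly_transpose' {R : Type*} [CommRing R] {m : Type*} [Fintype m] [DecidableEq m]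
    (N : Matrix m m R) : (Nᵀ).charpoly = N.charpoly := by
  rw [Matrix.charpoly, Matrix.charpoly, ← Matrix.det_transpose (charmatrix Nᵀ)]
  congr 1
  ext i j
  by_cases hij : i = j
  · subst hij; simp [charmatrix_apply_eq]
  · simp [transpose_apply, charmatrix_apply_ne _ _ _ hij, charmatrix_apply_ne _ _ _ (Ne.symm hij)]

lemma conjTranspose_map_ofReal {m : Type*} [Fintype m] (Q : Matrix m m ℝ) :
    (Q.map (Complex.ofReal))ᴴ = Qᵀ.map (Complex.ofReal) := by
  ext i j; simp [conjTranspose_apply]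

lemma transpose_eq_of_isHermitian {m : Type*} [Fintype m] {Q : Matrix m m ℝ}
    (h : Q.IsHermitian) : Qᵀ = Q := by
  have := h
  rw [Matrix.IsHermitian] at this
  ext i j
  have := congrFun (congrFun this i) j
  simpa [conjTranspose_apply] using this

lemma ofReal_dotProduct_mulVec {m : Type*} [Fintype m] (a b : m → ℝ) (Q : Matrix m m ℝ) :
    ((a ⬝ᵥ (Q *ᵥ b) : ℝ) : ℂ)
      = (fun i => (a i : ℂ)) ⬝ᵥ ((Q.map (Complex.ofReal)) *ᵥ (fun i => (b i : ℂ))) := by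
  simp only [dotProduct, mulVec, map_apply]
  push_cast
  rfl

lemma posDef_map_complex {m : Type*} [Fintype m] {Q : Matrix m m ℝ} (hQ : Q.PosDef) :
    (Q.map (Complex.ofReal)).PosDef := by
  have hsym : Qᵀ = Q := transpose_eq_of_isHermitian hQ.1
  refine Matrix.PosDef.of_dotProduct_mulVec_pos ?_ ?_
  · rw [Matrix.IsHermitian, conjTranspose_map_ofReal, hsym]
  · intro x hx
    set a : m → ℝ := fun i => (x i).re with ha
    set b : m → ℝ := fun i => (x i).im with hb
    set u : m → ℂ := fun i => ((a i : ℂ)) with hu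
    set w : m → ℂ := fun i => ((b i : ℂ)) with hw
    have hxuw : x = u + Complex.I • w := by
      funext i
      simp [hu, hw, ha, hb, mul_comm, Complex.re_add_im]
      rw [mul_comm]
      exact (Complex.re_add_im (x i)).symm
    have hstar : star x = u - Complex.I • w := by
      funext i
      simp [hxuw, hu, hw, Complex.ext_iff]
    set Qc := Q.map (Complex.ofReal) with hQc
    have cross : u ⬝ᵥ (Qc *ᵥ w) = w ⬝ᵥ (Qc *ᵥ u) := by
      rw [← ofReal_dotProduct_mulVec, ← ofReal_dotProduct_mulVec]
      norm_cast
      calc a ⬝ᵥ (Q *ᵥ b) = (a ᵥ* Q) ⬝ᵥ b := (Matrix.dotProduct_mulVec _ _ _)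
        _ = (Qᵀ *ᵥ a) ⬝ᵥ b := by rw [← Matrix.mulVec_transpose]
        _ = b ⬝ᵥ (Q *ᵥ a) := by rw [hsym, dotProduct_comm]
    have expand : star x ⬝ᵥ (Qc *ᵥ x)
        = u ⬝ᵥ (Qc *ᵥ u) + w ⬝ᵥ (Qc *ᵥ w) := by
      rw [hstar, hxuw]
      simp only [mulVec_add, mulVec_smul, sub_dotProduct, dotProduct_add, smul_dotProduct,
        dotProduct_smul, smul_eq_mul]
      rw [cross]
      ring_nf
      rw [Complex.I_sq]
      ring
    have hab : a ≠ 0 ∨ b ≠ 0 := by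
      by_contra hc
      push_neg at hc
      apply hx
      funext i
      have h1 := congrFun hc.1 i
      have h2 := congrFun hc.2 i
      simp [ha, hb] at h1 h2
      exact Complex.ext h1 h2
    have key : star x ⬝ᵥ (Qc *ᵥ x) = ((a ⬝ᵥ (Q *ᵥ a) + b ⬝ᵥ (Q *ᵥ b) : ℝ) : ℂ) := by
      rw [expand, Complex.ofReal_add, ofReal_dotProduct_mulVec, ofReal_dotProduct_mulVec]
    rw [key]
    have hpos : 0 < a ⬝ᵥ (Q *ᵥ a) + b ⬝ᵥ (Q *ᵥ b) := by
      rcases hab with h | h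
      · have h1 : 0 < a ⬝ᵥ (Q *ᵥ a) := by simpa using hQ.dotProduct_mulVec_pos h
        have h2 : 0 ≤ b ⬝ᵥ (Q *ᵥ b) := by simpa using hQ.posSemidef.dotProduct_mulVec_nonneg b
        linarith
      · have h1 : 0 ≤ a ⬝ᵥ (Q *ᵥ a) := by simpa using hQ.posSemidef.dotProduct_mulVec_nonneg a
        have h2 : 0 < b ⬝ᵥ (Q *ᵥ b) := by simpa using hQ.dotProduct_mulVec_pos h
        linarith
    exact_mod_cast Complex.zero_lt_real.mpr hpos

-- local copies of already-proven helpers (will merge later)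
lemma schur_of_lyap {n : ℕ} (F M : Matrix (Fin n) (Fin n) ℝ) (hM : M.PosDef)
    (hQ : (M - F * M * Fᵀ).PosDef) :
    ∀ z : ℂ, ((F.map (Complex.ofReal)).charpoly).IsRoot z → ‖z‖ < 1 := by
  intro z hz
  set N := F.map (Complex.ofReal) with hN
  -- star z is a root of N.charpoly
  have hmap : N.charpoly = F.charpoly.map (Complex.ofRealHom) := by
    rw [hN]
    exact Matrix.charpoly_map F Complex.ofRealHom
  have hstarroot : N.charpoly.IsRoot (star z) := by
    rw [Polynomial.IsRoot, hmap, Polynomial.eval_map] at hz ⊢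
    have : (starRingEnd ℂ) (Polynomial.eval₂ Complex.ofRealHom z F.charpoly)
        = Polynomial.eval₂ Complex.ofRealHom (star z) F.charpoly := by
      rw [Polynomial.hom_eval₂]
      congr 1
      ext r
      simp
    rw [← this, hz, map_zero]
  -- eigenvector of Nᵀ
  have hroot2 : (Nᵀ).charpoly.IsRoot (star z) := by rw [charpoly_transpose']; exact hstarroot
  obtain ⟨v, hv0, hv⟩ := exists_eigenvec Nᵀ hroot2
  set Mc := M.map (Complex.ofReal) with hMc
  have hMcPD := posDef_map_complex hM
  have hQcPD := posDef_map_complex hQ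
  -- key computation
  have hNH : Nᴴ = Nᵀ := by
    rw [hN, conjTranspose_map_ofReal, Matrix.transpose_map]
  have hQc : (M - F * M * Fᵀ).map (Complex.ofReal) = Mc - N * Mc * Nᵀ := by
    have : ((M - F * M * Fᵀ).map Complex.ofRealHom : Matrix (Fin n) (Fin n) ℂ)
        = M.map Complex.ofRealHom - (F.map Complex.ofRealHom) * (M.map Complex.ofRealHom)
          * (Fᵀ.map Complex.ofRealHom) := by
      simp [Matrix.map_sub, Matrix.map_mul]
    exact this
  have hquad := hQcPD.dotProduct_mulVec_pos hv0
  rw [hQc] at hquad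
  have hsplit : star v ⬝ᵥ ((Mc - N * Mc * Nᵀ) *ᵥ v)
      = star v ⬝ᵥ (Mc *ᵥ v) - (z * star z) * (star v ⬝ᵥ (Mc *ᵥ v)) := by
    rw [Matrix.sub_mulVec, dotProduct_sub]
    congr 1
    have h1 : (N * Mc * Nᵀ) *ᵥ v = N *ᵥ (Mc *ᵥ (Nᵀ *ᵥ v)) := by
      rw [← Matrix.mulVec_mulVec, ← Matrix.mulVec_mulVec]
    have h2 : star v ⬝ᵥ (N *ᵥ (Mc *ᵥ (star z • v)))
        = (z • star v) ⬝ᵥ (Mc *ᵥ (star z • v)) := by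
      rw [Matrix.dotProduct_mulVec]
      congr 1
      have : star v ᵥ* N = star (Nᴴ *ᵥ v) := by
        rw [Matrix.star_mulVec, Matrix.conjTranspose_conjTranspose]
      rw [this, hNH, hv, star_smul, star_star]
    rw [h1, hv, h2]
    simp only [Matrix.mulVec_smul, dotProduct_smul, smul_dotProduct, smul_eq_mul]
    ring
  rw [hsplit] at hquad
  set t := star v ⬝ᵥ (Mc *ᵥ v) with ht
  have htpos : 0 < t := hMcPD.dotProduct_mulVec_pos hv0
  -- conclude
  have habs : z * star z = ((Complex.normSq z : ℝ) : ℂ) := by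
    rw [show star z = (starRingEnd ℂ) z from rfl, Complex.mul_conj]
  rw [habs] at hquad
  have h1 : (0:ℂ) < (1 - (Complex.normSq z : ℂ)) * t := by
    rw [sub_mul, one_mul]; exact hquad
  have htim : t.im = 0 := by
    rcases htpos with ⟨hre, him⟩
    · exact him.symm
  have htre : 0 < t.re := by
    rcases htpos with ⟨hre, him⟩
    · simpa using hre
  have hlt : Complex.normSq z < 1 := by
    have h2 := h1.1
    simp [Complex.sub_re, Complex.mul_re, Complex.ofReal_re, Complex.ofReal_im, htim] at h2
    nlinarith
  have := Complex.sq_norm z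
  nlinarith [norm_nonneg z, Complex.sq_norm z]

lemma posDef_fromBlocks₁₁ {m l : Type*} [Fintype m] [DecidableEq m] [Fintype l] [DecidableEq l]
    {A : Matrix m m ℝ} (B : Matrix m l ℝ) (D : Matrix l l ℝ) (hA : A.PosDef) [Invertible A] :
    (fromBlocks A B Bᴴ D).PosDef ↔ (D - Bᴴ * A⁻¹ * B).PosDef := by
  constructor
  · intro h
    refine Matrix.PosDef.of_dotProduct_mulVec_pos ?_ (fun y hy => ?_)
    · rw [← Matrix.IsHermitian.fromBlocks₁₁ _ _ hA.1]
      exact h.1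
    · have key := h.dotProduct_mulVec_pos (x := Sum.elim (-((A⁻¹ * B) *ᵥ y)) y) (by
        intro hc
        apply hy
        funext i
        exact congrFun hc (Sum.inr i))
      rw [Matrix.dotProduct_mulVec, Matrix.schur_complement_eq₁₁ B D _ _ hA.1, neg_add_cancel] at key
      rw [Matrix.dotProduct_mulVec]
      simpa using key
  · intro h
    refine Matrix.PosDef.of_dotProduct_mulVec_pos ?_ (fun x hx => ?_)
    · rw [Matrix.IsHermitian.fromBlocks₁₁ _ _ hA.1]
      exact h.1
    · have hx' : x = Sum.elim (x ∘ Sum.inl) (x ∘ Sum.inr) := by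
        funext i; cases i <;> rfl
      rw [hx', Matrix.dotProduct_mulVec, Matrix.schur_complement_eq₁₁ B D _ _ hA.1]
      by_cases hy : x ∘ Sum.inr = 0
      · have hxl : x ∘ Sum.inl ≠ 0 := by
          intro hc
          apply hx
          funext i
          cases i with
          | inl i => exact congrFun hc i
          | inr i => exact congrFun hy i
        rw [hy]
        have h1 : 0 < star (x ∘ Sum.inl + (A⁻¹ * B) *ᵥ (0 : l → ℝ)) ᵥ*
            A ⬝ᵥ (x ∘ Sum.inl + (A⁻¹ * B) *ᵥ (0 : l → ℝ)) := by
          rw [Matrix.mulVec_zero, add_zero]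
          have := hA.dotProduct_mulVec_pos hxl
          rwa [Matrix.dotProduct_mulVec] at this
        have h2 : 0 ≤ star (0 : l → ℝ) ᵥ* (D - Bᴴ * A⁻¹ * B) ⬝ᵥ (0 : l → ℝ) := by
          simp
        linarith
      · have h1 : 0 ≤ star (x ∘ Sum.inl + (A⁻¹ * B) *ᵥ (x ∘ Sum.inr)) ᵥ*
            A ⬝ᵥ (x ∘ Sum.inl + (A⁻¹ * B) *ᵥ (x ∘ Sum.inr)) := by
          have := hA.posSemidef.dotProduct_mulVec_nonneg (x ∘ Sum.inl + (A⁻¹ * B) *ᵥ (x ∘ Sum.inr))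
          rwa [Matrix.dotProduct_mulVec] at this
        have h2 : 0 < star (x ∘ Sum.inr) ᵥ* (D - Bᴴ * A⁻¹ * B) ⬝ᵥ (x ∘ Sum.inr) := by
          have := h.dotProduct_mulVec_pos hy
          rwa [Matrix.dotProduct_mulVec] at this
        linarith

section GelfandBound

attribute [local instance] Matrix.linftyOpSeminormedAddCommGroup
attribute [local instance] Matrix.linftyOpNormedAddCommGroup Matrix.linftyOpNormedRing
  Matrix.linftyOpNormedSpace Matrix.linftyOpNormedAlgebra

lemma entry_nnnorm_le_linfty {α : Type*} [SeminormedAddCommGroup α] {m l : Type*}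
    [Fintype m] [Fintype l] (A : Matrix m l α) (i : m) (j : l) : ‖A i j‖₊ ≤ ‖A‖₊ := by
  rw [Matrix.linfty_opNNNorm_def]
  exact le_trans (Finset.single_le_sum (f := fun j => ‖A i j‖₊)
    (fun _ _ => zero_le) (Finset.mem_univ j))
    (Finset.le_sup (f := fun i => ∑ j, ‖A i j‖₊) (Finset.mem_univ i))

lemma geom_entry_bound {n : ℕ} (hn : 0 < n) (F : Matrix (Fin n) (Fin n) ℝ)
    (hF : ∀ z : ℂ, ((F.map (Complex.ofReal)).charpoly).IsRoot z → ‖z‖ < 1) :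
    ∃ ρ : ℝ≥0, ρ < 1 ∧ ∀ᶠ k in atTop, ∀ i j, |(F ^ k) i j| ≤ (ρ : ℝ) ^ k := by
  haveI : Nonempty (Fin n) := ⟨⟨0, hn⟩⟩
  set N := F.map (Complex.ofReal) with hN
  haveI : Nontrivial (Matrix (Fin n) (Fin n) ℂ) :=
    ⟨0, 1, fun h => by simpa using congrFun (congrFun h ⟨0, hn⟩) ⟨0, hn⟩⟩
  have hrad : spectralRadius ℂ N < 1 := by
    have h1 : spectralRadius ℂ N < ((1 : ℝ≥0) : ℝ≥0∞) := by
      apply spectrum.spectralRadius_lt_of_forall_lt N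
      intro z hz
      have habs := hF z (mem_spectrum_charpoly N hz)
      rw [← NNReal.coe_lt_coe]
      simpa using habs
    simpa using h1
  obtain ⟨ρ, hρr, hρ1⟩ := ENNReal.lt_iff_exists_nnreal_btwn.mp hrad
  have hρ1' : ρ < 1 := by exact_mod_cast hρ1
  refine ⟨ρ, hρ1', ?_⟩
  have hgel := spectrum.pow_nnnorm_pow_one_div_tendsto_nhds_spectralRadius N
  have hev := hgel.eventually_lt_const hρr
  filter_upwards [hev, eventually_gt_atTop 0] with k hk hk0 i j
  have hkR : (0 : ℝ) < (k : ℝ) := by exact_mod_cast hk0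
  have hNk : (‖N ^ k‖₊ : ℝ≥0∞) < (ρ : ℝ≥0∞) ^ k := by
    have h2 := ENNReal.rpow_lt_rpow hk hkR
    rw [← ENNReal.rpow_natCast (ρ : ℝ≥0∞) k]
    rw [← ENNReal.rpow_mul, one_div, inv_mul_cancel₀ hkR.ne', ENNReal.rpow_one] at h2
    exact h2
  have hNk' : ‖N ^ k‖₊ ≤ ρ ^ k := by
    have := hNk.le
    rw [← ENNReal.coe_pow, ENNReal.coe_le_coe] at this
    exact this
  have hmap : (F ^ k).map (Complex.ofReal) = N ^ k := by
    rw [hN]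
    exact (RingHom.mapMatrix (Complex.ofRealHom)).map_pow F k |>.symm ▸ rfl
  have hentry : ‖(N ^ k) i j‖₊ ≤ ρ ^ k := le_trans (entry_nnnorm_le_linfty _ i j) hNk'
  rw [← hmap] at hentry
  have : ‖((F ^ k) i j : ℂ)‖₊ ≤ ρ ^ k := hentry
  rw [← Real.norm_eq_abs]
  calc ‖(F ^ k) i j‖ = ‖((F ^ k) i j : ℂ)‖ := by simp
    _ ≤ ((ρ ^ k : ℝ≥0) : ℝ) := by exact_mod_cast this
    _ = (ρ : ℝ) ^ k := by push_cast; ring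

end GelfandBound

lemma lyap_of_schur {n : ℕ} (F : Matrix (Fin n) (Fin n) ℝ)
    (hF : ∀ z : ℂ, ((F.map (Complex.ofReal)).charpoly).IsRoot z → ‖z‖ < 1) :
    ∃ M : Matrix (Fin n) (Fin n) ℝ, M.PosDef ∧ M - F * M * Fᵀ = 1 := by
  rcases Nat.eq_zero_or_pos n with hn | hn
  · subst hn
    refine ⟨1, Matrix.PosDef.one, ?_⟩
    ext i j
    exact i.elim0
  obtain ⟨ρ, hρ1, hev⟩ := geom_entry_bound hn F hF
  set S : ℕ → Matrix (Fin n) (Fin n) ℝ := fun k => F ^ k * (F ^ k)ᵀ with hSdef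
  -- entrywise summability
  have hgs : Summable (fun k : ℕ => (n : ℝ) * ((ρ : ℝ) ^ 2) ^ k) := by
    apply Summable.mul_left
    apply summable_geometric_of_lt_one (by positivity)
    have : (ρ : ℝ) < 1 := hρ1
    nlinarith [ρ.coe_nonneg]
  have hentry_sum : ∀ i j, Summable (fun k => S k i j) := by
    intro i j
    apply Summable.of_norm_bounded_eventually_nat hgs
    filter_upwards [hev] with k hk
    have hS : S k i j = ∑ l, (F ^ k) i l * (F ^ k) j l := by
      rw [hSdef]
      simp only [Matrix.mul_apply, Matrix.transpose_apply]
    rw [hS]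
    calc ‖∑ l, (F ^ k) i l * (F ^ k) j l‖ ≤ ∑ l, ‖(F ^ k) i l * (F ^ k) j l‖ :=
          norm_sum_le _ _
      _ ≤ ∑ _l : Fin n, (ρ : ℝ) ^ k * (ρ : ℝ) ^ k := by
          apply Finset.sum_le_sum
          intro l _
          rw [norm_mul]
          exact mul_le_mul (hk i l) (hk j l) (norm_nonneg _)
            (by positivity)
      _ = (n : ℝ) * ((ρ : ℝ) ^ 2) ^ k := by
          rw [Finset.sum_const, Finset.card_univ, Fintype.card_fin, nsmul_eq_mul,
            ← pow_add, ← two_mul, pow_mul]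
  have hS_sum : Summable S :=
    Pi.summable.mpr fun i => Pi.summable.mpr fun j => hentry_sum i j
  set M := ∑' k, S k with hMdef
  have hsum : HasSum S M := hS_sum.hasSum
  have hSsymm : ∀ k, (S k)ᵀ = S k := by
    intro k
    rw [hSdef]
    simp only [Matrix.transpose_mul, Matrix.transpose_transpose]
  have hMsymm : Mᵀ = M := by
    rw [hMdef, Matrix.transpose_tsum]
    congr 1
    funext k
    exact hSsymm k
  -- the Lyapunov identity
  have hmulS : ∀ k, F * S k * Fᵀ = S (k + 1) := by
    intro k
    show F * (F ^ k * (F ^ k)ᵀ) * Fᵀ = F ^ (k + 1) * (F ^ (k + 1))ᵀ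
    have hp : F ^ (k + 1) = F * F ^ k := by
      rw [pow_succ, pow_mul_comm']
    rw [hp, Matrix.transpose_mul]
    simp only [Matrix.mul_assoc]
  have hg : HasSum (fun k => F * S k * Fᵀ) (F * M * Fᵀ) := by
    have hcont : Continuous (fun X : Matrix (Fin n) (Fin n) ℝ => F * X * Fᵀ) :=
      (continuous_const.matrix_mul continuous_id).matrix_mul continuous_const
    have := hsum.map (AddMonoidHom.mk' (fun X : Matrix (Fin n) (Fin n) ℝ => F * X * Fᵀ)
      (by intro X Y; simp [Matrix.mul_add, Matrix.add_mul])) hcont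
    exact this
  have hg2 : HasSum (fun k => S (k + 1)) (F * M * Fᵀ) := by
    have : (fun k => F * S k * Fᵀ) = fun k => S (k + 1) := funext hmulS
    rwa [this] at hg
  have hid : M = F * M * Fᵀ + 1 := by
    have h3 := (hasSum_nat_add_iff (f := S) 1).mp hg2
    rw [Finset.range_one, Finset.sum_singleton] at h3
    have h4 : S 0 = 1 := by rw [hSdef]; simp
    rw [h4] at h3
    exact hsum.unique h3
  -- positivity
  have hMpos : M.PosDef := by
    refine Matrix.PosDef.of_dotProduct_mulVec_pos ?_ ?_
    · show Mᴴ = M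
      have hct : Mᴴ = Mᵀ := by
        ext i j
        simp [Matrix.conjTranspose_apply]
      rw [hct, hMsymm]
    · intro x hx
      have hterm : HasSum (fun k => x ⬝ᵥ (S k *ᵥ x)) (x ⬝ᵥ (M *ᵥ x)) := by
        have hcont : Continuous (fun X : Matrix (Fin n) (Fin n) ℝ => x ⬝ᵥ (X *ᵥ x)) :=
          (continuous_const).dotProduct (continuous_id.matrix_mulVec continuous_const)
        exact hsum.map (AddMonoidHom.mk' (fun X : Matrix (Fin n) (Fin n) ℝ => x ⬝ᵥ (X *ᵥ x))
          (by intro X Y; simp [Matrix.add_mulVec, dotProduct_add])) hcont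
      have hnonneg : ∀ k, 0 ≤ x ⬝ᵥ (S k *ᵥ x) := by
        intro k
        have : x ⬝ᵥ (S k *ᵥ x) = ((F ^ k)ᵀ *ᵥ x) ⬝ᵥ ((F ^ k)ᵀ *ᵥ x) := by
          rw [hSdef]
          rw [← Matrix.mulVec_mulVec, Matrix.dotProduct_mulVec, ← Matrix.mulVec_transpose]
        rw [this]
        exact Finset.sum_nonneg fun i _ => mul_self_nonneg _
      have hzero : 0 < x ⬝ᵥ (S 0 *ᵥ x) := by
        have h4 : S 0 = 1 := by rw [hSdef]; simp
        rw [h4, Matrix.one_mulVec]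
        obtain ⟨i, hi⟩ : ∃ i, x i ≠ 0 := by
          by_contra hc
          push_neg at hc
          exact hx (funext hc)
        apply Finset.sum_pos' (fun j _ => mul_self_nonneg _)
        exact ⟨i, Finset.mem_univ i, mul_self_pos.mpr hi⟩
      have hle : x ⬝ᵥ (S 0 *ᵥ x) ≤ x ⬝ᵥ (M *ᵥ x) :=
        le_hasSum hterm 0 fun k _ => hnonneg k
      have : 0 < star x ⬝ᵥ (M *ᵥ x) := by
        have hsx : star x = x := by
          funext i; simp
        rw [hsx]
        exact lt_of_lt_of_le hzero hle
      exact this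
  exact ⟨M, hMpos, by nth_rewrite 1 [hid]; exact add_sub_cancel_left _ _⟩

lemma real_conjTranspose {m l : Type*} (X : Matrix m l ℝ) : Xᴴ = Xᵀ := by
  ext i j; simp [Matrix.conjTranspose_apply]

end Helpers

/-- A real square matrix is Schur stable if every root in `ℂ` of its
characteristic polynomial has modulus strictly less than 1. -/
def IsSchur {n : ℕ} (A : Matrix (Fin n) (Fin n) ℝ) : Prop :=
  ∀ z : ℂ, ((A.map (Complex.ofReal)).charpoly).IsRoot z → ‖z‖ < 1

/-- Discrete-time full-state feedback stabilization LMI: `A + BK` is Schur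
stable iff there are `M ≻ 0` (symmetric) and `L` with
`[[M, MAᵀ + LᵀBᵀ], [AM + BL, M]] ≻ 0` and `K = L M⁻¹`. -/
theorem stmt17 {n p : ℕ}
    (A : Matrix (Fin n) (Fin n) ℝ) (B : Matrix (Fin n) (Fin p) ℝ)
    (K : Matrix (Fin p) (Fin n) ℝ) :
    IsSchur (A + B * K) ↔
      ∃ (M : Matrix (Fin n) (Fin n) ℝ) (L : Matrix (Fin p) (Fin n) ℝ),
        M.PosDef ∧
        (Matrix.fromBlocks M (M * Aᵀ + Lᵀ * Bᵀ) (A * M + B * L) M).PosDef ∧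
        K = L * M⁻¹ := by
  set F := A + B * K with hF
  constructor
  · intro hschur
    obtain ⟨M, hM, hid⟩ := lyap_of_schur F hschur
    have hdet : IsUnit M.det := isUnit_iff_ne_zero.mpr hM.det_pos.ne'
    haveI : Invertible M := M.invertibleOfIsUnitDet hdet
    have hMs : Mᵀ = M := transpose_eq_of_isHermitian hM.1
    refine ⟨M, K * M, hM, ?_, (Matrix.mul_nonsing_inv_cancel_right M K hdet).symm⟩
    have htop : M * Aᵀ + (K * M)ᵀ * Bᵀ = M * Fᵀ := by
      rw [hF, Matrix.transpose_add, Matrix.transpose_mul, Matrix.transpose_mul,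
        Matrix.mul_add, Matrix.mul_assoc, hMs]
    have hbot : A * M + B * (K * M) = F * M := by
      rw [hF, Matrix.add_mul, Matrix.mul_assoc]
    rw [htop, hbot]
    have hct : F * M = (M * Fᵀ)ᴴ := by
      rw [real_conjTranspose, Matrix.transpose_mul, Matrix.transpose_transpose, hMs]
    rw [hct]
    rw [posDef_fromBlocks₁₁ (M * Fᵀ) M hM]
    have hsc : (M * Fᵀ)ᴴ * M⁻¹ * (M * Fᵀ) = F * M * Fᵀ := by
      rw [← hct, Matrix.mul_assoc, Matrix.nonsing_inv_mul_cancel_left M Fᵀ hdet]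
    rw [hsc, hid]
    exact Matrix.PosDef.one
  · rintro ⟨M, L, hM, hblock, hK⟩
    have hdet : IsUnit M.det := isUnit_iff_ne_zero.mpr hM.det_pos.ne'
    haveI : Invertible M := M.invertibleOfIsUnitDet hdet
    have hMs : Mᵀ = M := transpose_eq_of_isHermitian hM.1
    have hL : L = K * M := by
      rw [hK, Matrix.nonsing_inv_mul_cancel_right M L hdet]
    rw [hL] at hblock
    have htop : M * Aᵀ + (K * M)ᵀ * Bᵀ = M * Fᵀ := by
      rw [hF, Matrix.transpose_add, Matrix.transpose_mul, Matrix.transpose_mul,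
        Matrix.mul_add, Matrix.mul_assoc, hMs]
    have hbot : A * M + B * (K * M) = F * M := by
      rw [hF, Matrix.add_mul, Matrix.mul_assoc]
    rw [htop, hbot] at hblock
    have hct : F * M = (M * Fᵀ)ᴴ := by
      rw [real_conjTranspose, Matrix.transpose_mul, Matrix.transpose_transpose, hMs]
    rw [hct] at hblock
    rw [posDef_fromBlocks₁₁ (M * Fᵀ) M hM] at hblock
    have hsc : (M * Fᵀ)ᴴ * M⁻¹ * (M * Fᵀ) = F * M * Fᵀ := by
      rw [← hct, Matrix.mul_assoc, Matrix.nonsing_inv_mul_cancel_left M Fᵀ hdet]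
    rw [hsc] at hblock
    exact schur_of_lyap F M hM hblock
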